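/- Let m ≥ 1 be an integer and let β be a partition fitting inside the m×m square, with m×m-complement β*. Then: ℓ₁(β*) = ℓ₁(β) − 1 if β₁ = m and β has exactly m parts; ℓ₁(β*) = ℓ₁(β) if exactly one of the two conditions 'β₁ = m' and 'β has exactly m parts' holds; and ℓ₁(β*) = ℓ₁(β) + 1 if neither condition holds. -/
import Mathlib


namespace SquareKronecker

/-- The `i`-th largest part (1-indexed) of a partition of `n`, with the convention that
`nthPart α i = 0` when `i` exceeds the number of parts. -/
def nthPart {n : ℕ} (α : n.Partition) (i : ℕ) : ℕ :=
  ((α.parts.sort (· ≤ ·)).reverse).getD (i - 1) 0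

/-- `ℓ₁ α`: the number of distinct part sizes occurring in the partition `α`. -/
def distinctParts {n : ℕ} (α : n.Partition) : ℕ :=
  α.parts.toFinset.card

/-- `f k`: the number of partitions of `k` all of whose parts are at least `3`
(equivalently, with no parts equal to `1` or `2`). -/
def f (k : ℕ) : ℕ :=
  (Finset.univ.filter (fun α : k.Partition => ∀ p ∈ α.parts, 3 ≤ p)).card

/-- The `m × m`-complement of a partition `β` fitting inside the `m × m` square: the partition
whose parts are the nonzero values among `m - β_{m+1-i}` for `i = 1, …, m`. -/
def mmComplement (m : ℕ) {n : ℕ} (β : n.Partition) :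
    Nat.Partition (((Finset.range m).val.map (fun i => m - nthPart β (m - i))).sum) :=
  Nat.Partition.ofMultiset _

lemma mem_sortRev {n : ℕ} (β : n.Partition) (x : ℕ) :
    x ∈ (β.parts.sort (· ≤ ·)).reverse ↔ x ∈ β.parts := by
  rw [List.mem_reverse, Multiset.mem_sort]

lemma length_sortRev {n : ℕ} (β : n.Partition) :
    (β.parts.sort (· ≤ ·)).reverse.length = β.parts.card := by
  rw [List.length_reverse, Multiset.length_sort]

/-- Every part is at most the largest part. -/
lemma le_nthPart_one {n : ℕ} (β : n.Partition) (x : ℕ) (hx : x ∈ β.parts) :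
    x ≤ nthPart β 1 := by
  set L := (β.parts.sort (· ≤ ·)).reverse with hL
  have h' : L.Pairwise (fun a b => b ≤ a) :=
    List.pairwise_reverse.mpr (β.parts.pairwise_sort (· ≤ ·))
  have hxL : x ∈ L := (mem_sortRev β x).mpr hx
  obtain ⟨j, hj, rfl⟩ := List.mem_iff_getElem.mp hxL
  show L[j] ≤ L.getD (1 - 1) 0
  rw [show (1 : ℕ) - 1 = 0 from rfl, List.getD_eq_getElem _ _ (by omega)]
  rcases Nat.eq_zero_or_pos j with rfl | hj0
  · exact le_refl _
  · exact h'.rel_get_of_lt (a := ⟨0, by omega⟩) (b := ⟨j, hj⟩) (by simpa using hj0)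

lemma nthPart_one_mem {n : ℕ} (β : n.Partition) (h : nthPart β 1 ≠ 0) :
    nthPart β 1 ∈ β.parts := by
  set L := (β.parts.sort (· ≤ ·)).reverse with hL
  rcases Nat.eq_zero_or_pos L.length with h0 | hpos
  · exfalso
    apply h
    show L.getD (1 - 1) 0 = 0
    exact List.getD_eq_default _ _ (by omega)
  · have heq : nthPart β 1 = L[0] := by
      show L.getD (1 - 1) 0 = L[0]
      rw [show (1 : ℕ) - 1 = 0 from rfl, List.getD_eq_getElem _ _ (by omega)]
    rw [heq]
    exact (mem_sortRev β _).mp (L.getElem_mem _)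

lemma image_nthPart (m n : ℕ) (β : n.Partition) (hβ₂ : β.parts.card ≤ m) :
    (Finset.range m).image (fun i => nthPart β (m - i)) =
      if β.parts.card = m then β.parts.toFinset else insert 0 β.parts.toFinset := by
  set L := (β.parts.sort (· ≤ ·)).reverse with hL
  have hlen : L.length = β.parts.card := length_sortRev β
  ext x
  simp only [Finset.mem_image, Finset.mem_range]
  constructor
  · rintro ⟨i, hi, rfl⟩
    by_cases hc : m - i - 1 < L.length
    · have hmem : nthPart β (m - i) ∈ β.parts := by
        show L.getD (m - i - 1) 0 ∈ β.parts
        rw [List.getD_eq_getElem _ _ hc]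
        exact (mem_sortRev β _).mp (L.getElem_mem _)
      split_ifs
      · exact Multiset.mem_toFinset.mpr hmem
      · exact Finset.mem_insert_of_mem (Multiset.mem_toFinset.mpr hmem)
    · have h0 : nthPart β (m - i) = 0 := by
        show L.getD (m - i - 1) 0 = 0
        exact List.getD_eq_default _ _ (by omega)
      have hcm : β.parts.card ≠ m := by omega
      rw [if_neg hcm, h0]
      exact Finset.mem_insert_self 0 _
  · intro hx
    have hxcases : x ∈ β.parts ∨ (x = 0 ∧ β.parts.card ≠ m) := by
      split_ifs at hx with hc
      · exact Or.inl (Multiset.mem_toFinset.mp hx)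
      · rcases Finset.mem_insert.mp hx with rfl | hx'
        · exact Or.inr ⟨rfl, hc⟩
        · exact Or.inl (Multiset.mem_toFinset.mp hx')
    rcases hxcases with hxp | ⟨rfl, hc⟩
    · obtain ⟨j, hj, rfl⟩ := List.mem_iff_getElem.mp ((mem_sortRev β _).mpr hxp)
      have hj' : j < L.length := hj
      have hjm : j < m := by omega
      refine ⟨m - 1 - j, by omega, ?_⟩
      show L.getD (m - (m - 1 - j) - 1) 0 = L[j]
      rw [show m - (m - 1 - j) - 1 = j by omega, List.getD_eq_getElem _ _ hj]
    · refine ⟨0, by omega, ?_⟩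
      show L.getD (m - 0 - 1) 0 = 0
      exact List.getD_eq_default _ _ (by omega)

/-- Let `m ≥ 1` and let `β` be a partition fitting inside the `m × m` square, with
`m × m`-complement `β*`. Then `ℓ₁(β*) = ℓ₁(β) - 1` if `β₁ = m` and `β` has exactly `m` parts;
`ℓ₁(β*) = ℓ₁(β)` if exactly one of these two conditions holds; and `ℓ₁(β*) = ℓ₁(β) + 1`
if neither holds. -/
theorem distinctParts_mmComplement (m n : ℕ) (hm : 1 ≤ m) (β : n.Partition)
    (hβ₁ : nthPart β 1 ≤ m) (hβ₂ : β.parts.card ≤ m) :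
    (nthPart β 1 = m ∧ β.parts.card = m →
      distinctParts (mmComplement m β) = distinctParts β - 1) ∧
    (Xor' (nthPart β 1 = m) (β.parts.card = m) →
      distinctParts (mmComplement m β) = distinctParts β) ∧
    (¬ nthPart β 1 = m ∧ ¬ β.parts.card = m →
      distinctParts (mmComplement m β) = distinctParts β + 1) := by
  classical
  set S : Finset ℕ := (Finset.range m).image (fun i => nthPart β (m - i)) with hS
  have hparts : (mmComplement m β).parts =
      Multiset.filter (· ≠ 0) ((Finset.range m).val.map (fun i => m - nthPart β (m - i))) := rfl
  have hT : (mmComplement m β).parts.toFinset = (S.image (fun x => m - x)).erase 0 := by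
    rw [hparts, Multiset.toFinset_filter, Multiset.toFinset_map, Finset.val_toFinset,
      Finset.filter_ne', hS, Finset.image_image]
    rfl
  have hle : ∀ x ∈ S, x ≤ m := by
    intro x hx
    rw [hS, image_nthPart m n β hβ₂] at hx
    have : x ∈ β.parts ∨ x = 0 := by
      split_ifs at hx with hc
      · exact Or.inl (Multiset.mem_toFinset.mp hx)
      · rcases Finset.mem_insert.mp hx with rfl | hx'
        · exact Or.inr rfl
        · exact Or.inl (Multiset.mem_toFinset.mp hx')
    rcases this with hxp | rfl
    · exact le_trans (le_nthPart_one β x hxp) hβ₁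
    · omega
  have hmS : m ∈ S ↔ nthPart β 1 = m := by
    rw [hS, image_nthPart m n β hβ₂]
    have key : m ∈ β.parts ↔ nthPart β 1 = m := by
      constructor
      · intro h
        exact le_antisymm hβ₁ (le_nthPart_one β m h)
      · intro h
        exact h ▸ nthPart_one_mem β (by omega)
    split_ifs
    · rw [Multiset.mem_toFinset]; exact key
    · rw [Finset.mem_insert, Multiset.mem_toFinset]
      constructor
      · rintro (h | h)
        · omega
        · exact key.mp h
      · intro h; exact Or.inr (key.mpr h)
  have h0T : 0 ∈ S.image (fun x => m - x) ↔ m ∈ S := by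
    constructor
    · rintro h
      obtain ⟨y, hy, hy0⟩ := Finset.mem_image.mp h
      have := hle y hy
      have : y = m := by omega
      exact this ▸ hy
    · intro h
      exact Finset.mem_image.mpr ⟨m, h, Nat.sub_self m⟩
  have cardT : (S.image (fun x => m - x)).card = S.card :=
    Finset.card_image_of_injOn (fun a ha b hb h => by
      have := hle a ha; have := hle b hb; omega)
  have h0V : (0 : ℕ) ∉ β.parts.toFinset := by
    intro h
    exact absurd (β.parts_pos (Multiset.mem_toFinset.mp h)) (lt_irrefl 0)
  have cardS : S.card = if β.parts.card = m then distinctParts β else distinctParts β + 1 := by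
    rw [hS, image_nthPart m n β hβ₂]
    split_ifs
    · rfl
    · rw [Finset.card_insert_of_notMem h0V]; rfl
  have hfinal : distinctParts (mmComplement m β) =
      (if β.parts.card = m then distinctParts β else distinctParts β + 1) -
      (if nthPart β 1 = m then 1 else 0) := by
    show (mmComplement m β).parts.toFinset.card = _
    rw [hT]
    by_cases hb : nthPart β 1 = m
    · rw [Finset.card_erase_of_mem (h0T.mpr (hmS.mpr hb)), cardT, cardS, if_pos hb]
    · rw [Finset.erase_eq_of_notMem (fun h => hb (hmS.mp (h0T.mp h))), cardT, cardS,
        if_neg hb, Nat.sub_zero]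
  have hV1 : nthPart β 1 = m → 1 ≤ distinctParts β := by
    intro h
    have : m ∈ β.parts.toFinset := Multiset.mem_toFinset.mpr (h ▸ nthPart_one_mem β (by omega))
    exact Finset.card_pos.mpr ⟨m, this⟩
  refine ⟨?_, ?_, ?_⟩
  · rintro ⟨h1, h2⟩
    rw [hfinal, if_pos h2, if_pos h1]
  · rintro (⟨h1, h2⟩ | ⟨h2, h1⟩)
    · rw [hfinal, if_neg h2, if_pos h1]
      omega
    · rw [hfinal, if_pos h2, if_neg h1]
      omega
  · rintro ⟨h1, h2⟩
    rw [hfinal, if_neg h2, if_neg h1]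
    omega
end SquareKronecker
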